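/- arXiv:2305.02964 — 2 statements merged into one kernel-verified Lean document; each statement's English description precedes it below -/
import Mathlib

section
/- Let S be a signed graph on n ≥ 2 vertices whose adjacency matrix A₀ (a real symmetric matrix with zero diagonal and entries in {-1,0,1}) has exactly two distinct eigenvalues. Let A be the adjacency matrix of the s-neighbourhood corona S ⋆ₛ K₁, where K₁ is the one-vertex signed graph with adjacency matrix the 1×1 zero matrix. Then A has exactly four distinct eigenvalues. -/
open Matrix BigOperators Kronecker

/-- A signed graph on vertex set `V` is represented by its adjacency matrix: a real symmetric
matrix with zero diagonal and all entries in `{-1, 0, 1}`. -/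
def IsSignedAdj {V : Type*} (A : Matrix V V ℝ) : Prop :=
  A.IsHermitian ∧ (∀ i, A i i = 0) ∧ ∀ i j, A i j = -1 ∨ A i j = 0 ∨ A i j = 1

/-- The adjacency matrix of the s-neighbourhood corona `S₁ ⋆ₛ S₂`:
the block matrix `[[A₁, jᵀ ⊗ A₁], [(jᵀ ⊗ A₁)ᵀ, A₂ ⊗ I]]`, indexed by `Fin n₁ ⊕ (V × Fin n₁)`. -/
def coronaAdj {n₁ : ℕ} {V : Type*} [DecidableEq V]
    (A₁ : Matrix (Fin n₁) (Fin n₁) ℝ) (A₂ : Matrix V V ℝ) :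
    Matrix (Fin n₁ ⊕ V × Fin n₁) (Fin n₁ ⊕ V × Fin n₁) ℝ :=
  Matrix.fromBlocks A₁ (Matrix.of fun i p => A₁ i p.2) (Matrix.of fun p j => A₁ p.2 j)
    (A₂ ⊗ₖ (1 : Matrix (Fin n₁) (Fin n₁) ℝ))

lemma mem_spec_iff_det' {m : Type*} [Fintype m] [DecidableEq m]
    (M : Matrix m m ℝ) (μ : ℝ) :
    μ ∈ spectrum ℝ M ↔ (μ • (1 : Matrix m m ℝ) - M).det = 0 := by
  rw [spectrum.mem_iff, Matrix.isUnit_iff_isUnit_det, isUnit_iff_ne_zero, not_ne_iff]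
  have : (algebraMap ℝ (Matrix m m ℝ)) μ = μ • 1 := by
    rw [Matrix.algebraMap_eq_diagonal]
    ext i j
    simp [Matrix.diagonal, Matrix.one_apply]
  rw [this]

lemma det_quad' {n : ℕ} (A : Matrix (Fin n) (Fin n) ℝ) (hA : A.IsHermitian) (a b c : ℝ) :
    (a • (1 : Matrix (Fin n) (Fin n) ℝ) + b • A + c • (A * A)).det
      = ∏ i, (a + b * hA.eigenvalues i + c * hA.eigenvalues i ^ 2) := by
  set U : Matrix (Fin n) (Fin n) ℝ := (hA.eigenvectorUnitary : Matrix (Fin n) (Fin n) ℝ) with hU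
  have hU1 : U * star U = 1 := (Matrix.mem_unitaryGroup_iff).mp hA.eigenvectorUnitary.2
  have hU2 : star U * U = 1 := (Matrix.mem_unitaryGroup_iff').mp hA.eigenvectorUnitary.2
  set D : Matrix (Fin n) (Fin n) ℝ := Matrix.diagonal hA.eigenvalues with hD
  have hsp : A = U * D * star U := by
    have := hA.spectral_theorem
    rw [Unitary.conjStarAlgAut_apply] at this
    exact this
  have key : a • (1 : Matrix (Fin n) (Fin n) ℝ) + b • A + c • (A * A)
      = U * (a • 1 + b • D + c • (D * D)) * star U := by
    rw [hsp]
    rw [Matrix.mul_add, Matrix.mul_add, Matrix.add_mul, Matrix.add_mul]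
    congr 1
    · congr 1
      · rw [Matrix.mul_smul, Matrix.smul_mul, Matrix.mul_one, hU1]
      · rw [Matrix.mul_smul, Matrix.smul_mul]
    · rw [Matrix.mul_smul, Matrix.smul_mul]
      congr 1
      calc U * D * star U * (U * D * star U) = U * D * (star U * U) * D * star U := by
            noncomm_ring
        _ = U * (D * D) * star U := by rw [hU2]; noncomm_ring
  rw [key, Matrix.det_mul, Matrix.det_mul]
  have hdet1 : U.det * (star U).det = 1 := by
    rw [← Matrix.det_mul, hU1, Matrix.det_one]
  have hmid : a • (1 : Matrix (Fin n) (Fin n) ℝ) + b • D + c • (D * D)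
      = Matrix.diagonal (fun i => a + b * hA.eigenvalues i + c * hA.eigenvalues i ^ 2) := by
    rw [hD, Matrix.diagonal_mul_diagonal]
    ext i j
    rcases eq_or_ne i j with h | h
    · subst h
      simp only [Matrix.add_apply, Matrix.smul_apply, Matrix.diagonal_apply_eq,
        Matrix.one_apply_eq, smul_eq_mul]
      ring
    · simp only [Matrix.add_apply, Matrix.smul_apply, Matrix.diagonal_apply_ne _ h,
        Matrix.one_apply_ne h, smul_eq_mul]
      ring
  rw [hmid, Matrix.det_diagonal, mul_right_comm, hdet1, one_mul]

lemma sum_ev' {n : ℕ} (A : Matrix (Fin n) (Fin n) ℝ) (hA : A.IsHermitian) :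
    ∑ i, hA.eigenvalues i = A.trace := by
  set U : Matrix (Fin n) (Fin n) ℝ := (hA.eigenvectorUnitary : Matrix (Fin n) (Fin n) ℝ) with hU
  have hU2 : star U * U = 1 := (Matrix.mem_unitaryGroup_iff').mp hA.eigenvectorUnitary.2
  have hsp : A = U * Matrix.diagonal hA.eigenvalues * star U := by
    have := hA.spectral_theorem
    rw [Unitary.conjStarAlgAut_apply] at this
    exact this
  conv_rhs => rw [hsp]
  rw [Matrix.trace_mul_cycle, hU2, Matrix.one_mul, Matrix.trace_diagonal]

lemma mixed_ne' (a b : ℕ) (ha : 0 < a) (hb : 0 < b) :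
    (a : ℝ) * ((1 - Real.sqrt 5) / 2) + (b : ℝ) * ((1 + Real.sqrt 5) / 2) ≠ 0 := by
  intro h
  have h5 : Irrational (Real.sqrt 5) := by
    have := (by norm_num : Nat.Prime 5).irrational_sqrt
    simpa using this
  rcases eq_or_ne a b with rfl | hab
  · have ha' : (0 : ℝ) < a := by exact_mod_cast ha
    nlinarith
  · have hab' : (a : ℝ) - b ≠ 0 := by
      intro h'
      exact hab (by exact_mod_cast sub_eq_zero.mp h')
    have hs : Real.sqrt 5 = ((a : ℝ) + b) / ((a : ℝ) - b) := by
      field_simp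
      nlinarith [h]
    refine h5 ⟨((a : ℚ) + b) / ((a : ℚ) - b), ?_⟩
    rw [hs]
    push_cast
    ring

/-- If a signed graph `S` on `n ≥ 2` vertices has exactly two distinct eigenvalues, then the
adjacency matrix of `S ⋆ₛ K₁` (where `K₁` is the one-vertex signed graph, with adjacency
matrix the `1 × 1` zero matrix) has exactly four distinct eigenvalues. -/
theorem corona_adj_K1_four_eigenvalues {n : ℕ}
    (A₀ : Matrix (Fin n) (Fin n) ℝ) (h₀ : IsSignedAdj A₀) (hn : 2 ≤ n)
    (h2 : (spectrum ℝ A₀).ncard = 2) :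
    (spectrum ℝ (coronaAdj A₀ (0 : Matrix (Fin 1) (Fin 1) ℝ))).ncard = 4 := by
  obtain ⟨hA, hdiag, -⟩ := h₀
  set ev := hA.eigenvalues with hev
  -- spectrum of A₀ equals range of eigenvalues
  have hspecA : spectrum ℝ A₀ = Set.range ev := by
    ext μ
    constructor
    · intro hμ
      rw [mem_spec_iff_det' A₀ μ] at hμ
      have hform : μ • (1 : Matrix (Fin n) (Fin n) ℝ) - A₀
          = μ • 1 + (-1 : ℝ) • A₀ + (0 : ℝ) • (A₀ * A₀) := by
        rw [zero_smul, add_zero, neg_one_smul, sub_eq_add_neg]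
      rw [hform, det_quad' A₀ hA] at hμ
      obtain ⟨i, -, hi⟩ := Finset.prod_eq_zero_iff.mp hμ
      exact ⟨i, by nlinarith [hi]⟩
    · rintro ⟨i, rfl⟩
      exact hA.eigenvalues_mem_spectrum_real i
  -- trace is zero
  have htr : ∑ i, ev i = 0 := by
    rw [sum_ev' A₀ hA]
    simp [Matrix.trace, Matrix.diag, hdiag]
  -- the two eigenvalues
  obtain ⟨l₁, l₂, hne, hS⟩ := Set.ncard_eq_two.mp h2
  have hrange : Set.range ev = ({l₁, l₂} : Set ℝ) := by rw [← hspecA, hS]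
  have hmem : ∀ i, ev i = l₁ ∨ ev i = l₂ := by
    intro i
    have : ev i ∈ ({l₁, l₂} : Set ℝ) := hrange ▸ Set.mem_range_self i
    simpa using this
  obtain ⟨i₁, hi₁⟩ : ∃ i, ev i = l₁ := by
    have : l₁ ∈ Set.range ev := by rw [hrange]; exact Set.mem_insert _ _
    exact this
  obtain ⟨i₂, hi₂⟩ : ∃ i, ev i = l₂ := by
    have : l₂ ∈ Set.range ev := by rw [hrange]; exact Set.mem_insert_of_mem _ rfl
    exact this
  -- multiplicities
  set s : Finset (Fin n) := Finset.univ.filter (fun i => ev i = l₁) with hsdef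
  set t : Finset (Fin n) := Finset.univ.filter (fun i => ¬ ev i = l₁) with htdef
  set a : ℕ := s.card with hadef
  set b : ℕ := t.card with hbdef
  have ha : 0 < a := Finset.card_pos.mpr ⟨i₁, by simp [hsdef, hi₁]⟩
  have hb : 0 < b := Finset.card_pos.mpr ⟨i₂, by simp [htdef, hi₂]; intro h; exact hne (h ▸ hi₂ ▸ rfl)⟩
  have hsum : (a : ℝ) * l₁ + (b : ℝ) * l₂ = 0 := by
    have hsplit := Finset.sum_filter_add_sum_filter_not Finset.univ (fun i => ev i = l₁) ev
    have h1 : ∑ i ∈ s, ev i = (a : ℝ) * l₁ := by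
      rw [Finset.sum_congr rfl (fun i hi => (Finset.mem_filter.mp hi).2), Finset.sum_const,
        nsmul_eq_mul]
    have h2' : ∑ i ∈ t, ev i = (b : ℝ) * l₂ := by
      rw [Finset.sum_congr rfl (fun i hi => (hmem i).resolve_left (Finset.mem_filter.mp hi).2),
        Finset.sum_const, nsmul_eq_mul]
    rw [h1, h2'] at hsplit
    rw [hsplit]
    exact htr
  have hl₁ : l₁ ≠ 0 := by
    intro h
    have hb' : (b : ℝ) ≠ 0 := Nat.cast_ne_zero.mpr hb.ne'
    have h2' : (b : ℝ) * l₂ = 0 := by rw [h] at hsum; linarith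
    exact hne (by rw [h, (mul_eq_zero.mp h2').resolve_left hb'])
  have hl₂ : l₂ ≠ 0 := by
    intro h
    have ha' : (a : ℝ) ≠ 0 := Nat.cast_ne_zero.mpr ha.ne'
    have h2' : (a : ℝ) * l₁ = 0 := by rw [h] at hsum; linarith
    exact hne (by rw [h, (mul_eq_zero.mp h2').resolve_left ha'])
  -- golden ratio constants
  set φ : ℝ := (1 + Real.sqrt 5) / 2 with hφdef
  set ψ : ℝ := (1 - Real.sqrt 5) / 2 with hψdef
  have h5 : Real.sqrt 5 * Real.sqrt 5 = 5 := Real.mul_self_sqrt (by norm_num)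
  have hs5pos : 0 < Real.sqrt 5 := Real.sqrt_pos.mpr (by norm_num)
  have hs5gt : 1 < Real.sqrt 5 := by nlinarith
  have hφ0 : φ ≠ 0 := by rw [hφdef]; positivity
  have hψ0 : ψ ≠ 0 := by
    rw [hψdef]
    intro h
    nlinarith
  have hfactor : ∀ μ e : ℝ, μ ^ 2 - μ * e - e ^ 2 = (μ - φ * e) * (μ - ψ * e) := by
    intro μ e
    rw [hφdef, hψdef]
    nlinarith [h5]
  -- mixed non-equalities
  have hne12 : φ * l₁ ≠ ψ * l₂ := by
    intro heq
    have key : l₂ * ((a : ℝ) * ψ + (b : ℝ) * φ) = 0 := by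
      linear_combination φ * hsum - (a : ℝ) * heq
    rcases mul_eq_zero.mp key with h | h
    · exact hl₂ h
    · exact mixed_ne' a b ha hb (by rw [hφdef, hψdef] at h; linarith)
  have hne21 : φ * l₂ ≠ ψ * l₁ := by
    intro heq
    have key : l₂ * ((a : ℝ) * φ + (b : ℝ) * ψ) = 0 := by
      linear_combination ψ * hsum + (a : ℝ) * heq
    rcases mul_eq_zero.mp key with h | h
    · exact hl₂ h
    · exact mixed_ne' b a hb ha (by rw [hφdef, hψdef] at h; linarith)
  -- reindex the corona matrix
  set M' : Matrix (Fin n ⊕ Fin n) (Fin n ⊕ Fin n) ℝ :=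
    Matrix.fromBlocks A₀ A₀ A₀ 0 with hM'
  set e : (Fin n ⊕ Fin 1 × Fin n) ≃ (Fin n ⊕ Fin n) :=
    Equiv.sumCongr (Equiv.refl _)
      ⟨fun p => p.2, fun j => ((0 : Fin 1), j),
        fun p => Prod.ext (Subsingleton.elim _ _) rfl, fun j => rfl⟩ with hedef
  have hre : coronaAdj A₀ (0 : Matrix (Fin 1) (Fin 1) ℝ)
      = Matrix.reindexAlgEquiv ℝ ℝ e.symm M' := by
    rw [Matrix.reindexAlgEquiv_apply]
    ext i j
    rcases i with i | p <;> rcases j with j | q <;>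
      simp [coronaAdj, hM', hedef, Matrix.fromBlocks, Matrix.kroneckerMap]
  have hspecEq : spectrum ℝ (coronaAdj A₀ (0 : Matrix (Fin 1) (Fin 1) ℝ)) = spectrum ℝ M' := by
    rw [hre]
    exact AlgEquiv.spectrum_eq (Matrix.reindexAlgEquiv ℝ ℝ e.symm) M'
  -- A₀ is invertible
  have hdetA : A₀.det ≠ 0 := by
    have hform : A₀ = (0 : ℝ) • (1 : Matrix (Fin n) (Fin n) ℝ) + (1 : ℝ) • A₀
        + (0 : ℝ) • (A₀ * A₀) := by
      rw [zero_smul, zero_smul, one_smul, zero_add, add_zero]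
    rw [hform, det_quad' A₀ hA, ← hev]
    refine Finset.prod_ne_zero_iff.mpr fun i _ => ?_
    rcases hmem i with h | h <;> rw [h]
    · intro h'; exact hl₁ (by linarith)
    · intro h'; exact hl₂ (by linarith)
  -- spectrum of M'
  have hspecM : spectrum ℝ M' = ({φ * l₁, ψ * l₁, φ * l₂, ψ * l₂} : Set ℝ) := by
    ext μ
    rcases eq_or_ne μ 0 with rfl | hμ0
    · constructor
      · intro h
        exfalso
        rw [mem_spec_iff_det' M' 0, zero_smul, zero_sub, Matrix.det_neg] at h
        haveI : Invertible A₀ := A₀.invertibleOfIsUnitDet (isUnit_iff_ne_zero.mpr hdetA)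
        rw [hM', Matrix.det_fromBlocks₁₁] at h
        have hAA : A₀ * ⅟A₀ * A₀ = A₀ := by rw [mul_invOf_self, Matrix.one_mul]
        rw [hAA, zero_sub, Matrix.det_neg] at h
        rcases mul_eq_zero.mp h with h' | h'
        · exact pow_ne_zero _ (by norm_num : (-1 : ℝ) ≠ 0) h'
        · rcases mul_eq_zero.mp h' with h'' | h''
          · exact hdetA h''
          · rcases mul_eq_zero.mp h'' with h3 | h3
            · exact pow_ne_zero _ (by norm_num : (-1 : ℝ) ≠ 0) h3
            · exact hdetA h3
      · intro h
        exfalso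
        simp only [Set.mem_insert_iff, Set.mem_singleton_iff] at h
        rcases h with h | h | h | h
        · exact mul_ne_zero hφ0 hl₁ h.symm
        · exact mul_ne_zero hψ0 hl₁ h.symm
        · exact mul_ne_zero hφ0 hl₂ h.symm
        · exact mul_ne_zero hψ0 hl₂ h.symm
    · -- μ ≠ 0
      haveI : Invertible (μ • (1 : Matrix (Fin n) (Fin n) ℝ)) :=
        ⟨μ⁻¹ • 1, by rw [Matrix.smul_mul, Matrix.mul_smul, Matrix.one_mul, smul_smul,
            inv_mul_cancel₀ hμ0, one_smul],
          by rw [Matrix.smul_mul, Matrix.mul_smul, Matrix.one_mul, smul_smul,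
            mul_inv_cancel₀ hμ0, one_smul]⟩
      have hblocks : μ • (1 : Matrix (Fin n ⊕ Fin n) (Fin n ⊕ Fin n) ℝ) - M'
          = Matrix.fromBlocks (μ • 1 - A₀) (-A₀) (-A₀) (μ • 1) := by
        rw [hM']
        ext i j
        rcases i with i | i <;> rcases j with j | j <;>
          simp [Matrix.fromBlocks, Matrix.one_apply]
      have hinv : (⅟(μ • (1 : Matrix (Fin n) (Fin n) ℝ))) = μ⁻¹ • 1 :=
        invOf_eq_right_inv (by
          rw [Matrix.smul_mul, Matrix.mul_smul, Matrix.one_mul, smul_smul,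
            mul_inv_cancel₀ hμ0, one_smul])
      have hdet : (μ • (1 : Matrix (Fin n ⊕ Fin n) (Fin n ⊕ Fin n) ℝ) - M').det
          = ∏ i, (μ ^ 2 - μ * ev i - ev i ^ 2) := by
        rw [hblocks, Matrix.det_fromBlocks₂₂, hinv]
        have hmul : (-A₀) * (μ⁻¹ • (1 : Matrix (Fin n) (Fin n) ℝ)) * (-A₀)
            = μ⁻¹ • (A₀ * A₀) := by
          rw [Matrix.mul_smul, Matrix.mul_one, Matrix.smul_mul, Matrix.neg_mul, Matrix.mul_neg,
            neg_neg]
        rw [hmul]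
        have hform : μ • (1 : Matrix (Fin n) (Fin n) ℝ) - A₀ - μ⁻¹ • (A₀ * A₀)
            = μ • 1 + (-1 : ℝ) • A₀ + (-μ⁻¹) • (A₀ * A₀) := by
          rw [neg_one_smul, neg_smul, sub_eq_add_neg, sub_eq_add_neg]
        rw [hform, det_quad' A₀ hA, ← hev, Matrix.det_smul, Matrix.det_one, mul_one,
          ← Finset.card_univ, ← Finset.prod_const, ← Finset.prod_mul_distrib]
        refine Finset.prod_congr rfl fun i _ => ?_
        field_simp
        ring
      rw [mem_spec_iff_det' M' μ, hdet]
      rw [Finset.prod_eq_zero_iff]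
      constructor
      · rintro ⟨i, -, hi⟩
        rw [hfactor] at hi
        simp only [Set.mem_insert_iff, Set.mem_singleton_iff]
        rcases mul_eq_zero.mp hi with h | h <;> rcases hmem i with h' | h' <;>
          rw [h'] at h
        · left; linarith [sub_eq_zero.mp h]
        · right; right; left; linarith [sub_eq_zero.mp h]
        · right; left; linarith [sub_eq_zero.mp h]
        · right; right; right; linarith [sub_eq_zero.mp h]
      · intro h
        simp only [Set.mem_insert_iff, Set.mem_singleton_iff] at h
        rcases h with h | h | h | h
        · exact ⟨i₁, Finset.mem_univ _, by rw [hfactor, hi₁, h]; ring⟩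
        · exact ⟨i₁, Finset.mem_univ _, by rw [hfactor, hi₁, h]; ring⟩
        · exact ⟨i₂, Finset.mem_univ _, by rw [hfactor, hi₂, h]; ring⟩
        · exact ⟨i₂, Finset.mem_univ _, by rw [hfactor, hi₂, h]; ring⟩
  -- distinctness and cardinality
  have hsub : φ - ψ = Real.sqrt 5 := by rw [hφdef, hψdef]; ring
  have d1 : φ * l₁ ≠ ψ * l₁ := by
    intro h
    exact hl₁ (by
      have : (φ - ψ) * l₁ = 0 := by linarith [h]
      rcases mul_eq_zero.mp this with h' | h'
      · rw [hsub] at h'; linarith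
      · exact h')
  have d2 : φ * l₂ ≠ ψ * l₂ := by
    intro h
    exact hl₂ (by
      have : (φ - ψ) * l₂ = 0 := by linarith [h]
      rcases mul_eq_zero.mp this with h' | h'
      · rw [hsub] at h'; linarith
      · exact h')
  have d3 : φ * l₁ ≠ φ * l₂ := fun h => hne (mul_left_cancel₀ hφ0 h)
  have d4 : ψ * l₁ ≠ ψ * l₂ := fun h => hne (mul_left_cancel₀ hψ0 h)
  rw [hspecEq, hspecM]
  rw [Set.ncard_insert_of_notMem (by
      simp only [Set.mem_insert_iff, Set.mem_singleton_iff]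
      push_neg
      exact ⟨d1, d3, hne12⟩)
    ((Set.finite_singleton _).insert _ |>.insert _)]
  rw [Set.ncard_insert_of_notMem (by
      simp only [Set.mem_insert_iff, Set.mem_singleton_iff]
      push_neg
      exact ⟨fun h => hne21 h.symm, d4⟩)
    ((Set.finite_singleton _).insert _)]
  rw [Set.ncard_pair d2]
end

section
/- Let S₁ and S₂ be signed graphs on the same number n of vertices whose adjacency matrices A₁ and A₂ are cospectral, i.e. have equal characteristic polynomials, and let S be any signed graph with adjacency matrix B (m×m). Then the adjacency matrices of the s-neighbourhood coronas S₁ ⋆ₛ S and S₂ ⋆ₛ S are also cospectral, i.e. have equal characteristic polynomials. -/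
open Matrix BigOperators Kronecker Polynomial

section Aux

variable {n : ℕ} {V : Type*} [Fintype V] [DecidableEq V]

/-- charpoly is invariant under conjugation. -/
lemma my_charpoly_conj {k : Type*} [Fintype k] [DecidableEq k]
    (P M Q : Matrix k k ℝ) (h1 : P * Q = 1) (h2 : Q * P = 1) :
    (P * M * Q).charpoly = M.charpoly := by
  have key : charmatrix (P * M * Q) =
      (C : ℝ →+* ℝ[X]).mapMatrix P * charmatrix M * (C : ℝ →+* ℝ[X]).mapMatrix Q := by
    rw [charmatrix, charmatrix, mul_sub, sub_mul]
    congr 1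
    · rw [mul_assoc, scalar_commute (X : ℝ[X]) (Commute.all _) _, ← mul_assoc,
        ← _root_.map_mul, h1, _root_.map_one, one_mul]
    · rw [← _root_.map_mul, ← _root_.map_mul]
  have h3 : (C.mapMatrix P).det * (C.mapMatrix Q).det = 1 := by
    rw [← Matrix.det_mul, ← _root_.map_mul, h1, _root_.map_one, Matrix.det_one]
  rw [Matrix.charpoly, Matrix.charpoly, key, Matrix.det_mul, Matrix.det_mul,
    mul_right_comm, h3, one_mul]

/-- The "column selector" matrix. -/
def Emat (n : ℕ) (V : Type*) [Fintype V] [DecidableEq V] :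
    Matrix (Fin n) (V × Fin n) ℝ :=
  Matrix.of fun i p => if p.2 = i then (1 : ℝ) else 0

lemma Emat_mul_kron (C : Matrix (Fin n) (Fin n) ℝ) :
    Emat n V * ((1 : Matrix V V ℝ) ⊗ₖ C) = C * Emat n V := by
  ext i ⟨v, j⟩
  simp [Emat, Matrix.mul_apply, Fintype.sum_prod_type, Matrix.one_apply]

lemma kron_mul_EmatT (C : Matrix (Fin n) (Fin n) ℝ) :
    ((1 : Matrix V V ℝ) ⊗ₖ C) * (Emat n V)ᵀ = (Emat n V)ᵀ * C := by
  ext ⟨v, j⟩ i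
  simp [Emat, Matrix.mul_apply, Fintype.sum_prod_type, Matrix.one_apply]

lemma coronaAdj_eq (A : Matrix (Fin n) (Fin n) ℝ) (B : Matrix V V ℝ) :
    coronaAdj A B = Matrix.fromBlocks A (A * Emat n V) ((Emat n V)ᵀ * A)
      (B ⊗ₖ (1 : Matrix (Fin n) (Fin n) ℝ)) := by
  have hE1 : (Matrix.of fun i (p : V × Fin n) => A i p.2) = A * Emat n V := by
    ext i ⟨v, j⟩
    simp [Emat, Matrix.mul_apply]
  have hE2 : (Matrix.of fun (p : V × Fin n) j => A p.2 j) = (Emat n V)ᵀ * A := by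
    ext ⟨v, j⟩ i
    simp [Emat, Matrix.mul_apply]
  rw [coronaAdj, hE1, hE2]

lemma corona_charpoly_conj (A₁ : Matrix (Fin n) (Fin n) ℝ) (B : Matrix V V ℝ)
    (U W : Matrix (Fin n) (Fin n) ℝ) (h1 : U * W = 1) (h2 : W * U = 1) :
    (coronaAdj (U * A₁ * W) B).charpoly = (coronaAdj A₁ B).charpoly := by
  have hKK' : ((1 : Matrix V V ℝ) ⊗ₖ U) * ((1 : Matrix V V ℝ) ⊗ₖ W) = 1 := by
    rw [← Matrix.mul_kronecker_mul, h1, Matrix.one_mul, Matrix.one_kronecker_one]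
  have hK'K : ((1 : Matrix V V ℝ) ⊗ₖ W) * ((1 : Matrix V V ℝ) ⊗ₖ U) = 1 := by
    rw [← Matrix.mul_kronecker_mul, h2, Matrix.one_mul, Matrix.one_kronecker_one]
  have e2 : U * (A₁ * Emat n V) * ((1 : Matrix V V ℝ) ⊗ₖ W) = U * A₁ * W * Emat n V := by
    rw [← Matrix.mul_assoc, Matrix.mul_assoc (U * A₁), Emat_mul_kron W, ← Matrix.mul_assoc]
  have e3 : ((1 : Matrix V V ℝ) ⊗ₖ U) * ((Emat n V)ᵀ * A₁) * W
      = (Emat n V)ᵀ * (U * A₁ * W) := by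
    rw [← Matrix.mul_assoc, kron_mul_EmatT U, Matrix.mul_assoc, Matrix.mul_assoc,
      Matrix.mul_assoc]
  have e4 : ((1 : Matrix V V ℝ) ⊗ₖ U) * (B ⊗ₖ (1 : Matrix (Fin n) (Fin n) ℝ))
      * ((1 : Matrix V V ℝ) ⊗ₖ W) = B ⊗ₖ (1 : Matrix (Fin n) (Fin n) ℝ) := by
    rw [← Matrix.mul_kronecker_mul, ← Matrix.mul_kronecker_mul]
    simp only [Matrix.one_mul, Matrix.mul_one, h1]
  have hb : coronaAdj (U * A₁ * W) B =
      Matrix.fromBlocks U 0 0 ((1 : Matrix V V ℝ) ⊗ₖ U) * coronaAdj A₁ B *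
        Matrix.fromBlocks W 0 0 ((1 : Matrix V V ℝ) ⊗ₖ W) := by
    rw [coronaAdj_eq, coronaAdj_eq, Matrix.fromBlocks_multiply, Matrix.fromBlocks_multiply]
    simp only [Matrix.mul_zero, Matrix.zero_mul, add_zero, zero_add]
    rw [Matrix.fromBlocks_inj]
    exact ⟨by rw [Matrix.mul_assoc], e2.symm, e3.symm, e4.symm⟩
  have hP : Matrix.fromBlocks U 0 0 ((1 : Matrix V V ℝ) ⊗ₖ U) *
      Matrix.fromBlocks W 0 0 ((1 : Matrix V V ℝ) ⊗ₖ W) = 1 := by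
    rw [Matrix.fromBlocks_multiply]
    simp only [Matrix.mul_zero, Matrix.zero_mul, add_zero, zero_add, h1, hKK']
    exact Matrix.fromBlocks_one
  have hQ : Matrix.fromBlocks W 0 0 ((1 : Matrix V V ℝ) ⊗ₖ W) *
      Matrix.fromBlocks U 0 0 ((1 : Matrix V V ℝ) ⊗ₖ U) = 1 := by
    rw [Matrix.fromBlocks_multiply]
    simp only [Matrix.mul_zero, Matrix.zero_mul, add_zero, zero_add, h2, hK'K]
    exact Matrix.fromBlocks_one
  rw [hb, my_charpoly_conj _ _ _ hP hQ]

lemma exists_perm_of_charpoly_diag_eq (d₁ d₂ : Fin n → ℝ)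
    (h : (Matrix.diagonal d₁).charpoly = (Matrix.diagonal d₂).charpoly) :
    ∃ σ : Equiv.Perm (Fin n), d₁ = d₂ ∘ σ := by
  have hd : ∀ d : Fin n → ℝ, (Matrix.diagonal d).charpoly
      = (Multiset.map (fun a => X - C a) (Finset.univ.val.map d)).prod := by
    intro d
    rw [Matrix.charpoly_of_upperTriangular _ (Matrix.blockTriangular_diagonal d)]
    simp [Finset.prod, Multiset.map_map, Function.comp_def]
  rw [hd, hd] at h
  have hroots := congrArg Polynomial.roots h
  rw [Polynomial.roots_multiset_prod_X_sub_C, Polynomial.roots_multiset_prod_X_sub_C] at hroots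
  rw [Fin.univ_val_map, Fin.univ_val_map] at hroots
  have hperm : List.Perm (List.ofFn d₁) (List.ofFn d₂) := Multiset.coe_eq_coe.mp hroots
  set s₁ := Tuple.sort d₁
  set s₂ := Tuple.sort d₂
  have hsorted : d₁ ∘ s₁ = d₂ ∘ s₂ := by
    apply List.ofFn_injective
    refine List.Perm.eq_of_sortedLE ((Tuple.monotone_sort d₁).sortedLE_ofFn)
      ((Tuple.monotone_sort d₂).sortedLE_ofFn) ?_
    exact (s₁.ofFn_comp_perm d₁).trans (hperm.trans (s₂.ofFn_comp_perm d₂).symm)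
  refine ⟨s₁.symm.trans s₂, funext fun i => ?_⟩
  have := congrFun hsorted (s₁.symm i)
  simpa using this

lemma corona_charpoly_perm (σ : Equiv.Perm (Fin n)) (d : Fin n → ℝ) (B : Matrix V V ℝ) :
    (coronaAdj (Matrix.diagonal (d ∘ σ)) B).charpoly
      = (coronaAdj (Matrix.diagonal d) B).charpoly := by
  have e : (Fin n ⊕ V × Fin n) ≃ (Fin n ⊕ V × Fin n) :=
    Equiv.sumCongr σ (Equiv.prodCongr (Equiv.refl V) σ)
  have key : coronaAdj (Matrix.diagonal (d ∘ σ)) B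
      = (coronaAdj (Matrix.diagonal d) B).submatrix
          (Equiv.sumCongr σ (Equiv.prodCongr (Equiv.refl V) σ))
          (Equiv.sumCongr σ (Equiv.prodCongr (Equiv.refl V) σ)) := by
    ext i j
    rcases i with i | ⟨v, i⟩ <;> rcases j with j | ⟨w, j⟩ <;>
      simp [coronaAdj, Matrix.diagonal_apply, Matrix.one_apply,
        EmbeddingLike.apply_eq_iff_eq, Function.comp]
  rw [key]
  have : (coronaAdj (Matrix.diagonal d) B).submatrix
        (Equiv.sumCongr σ (Equiv.prodCongr (Equiv.refl V) σ))
        (Equiv.sumCongr σ (Equiv.prodCongr (Equiv.refl V) σ))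
      = Matrix.reindex (Equiv.sumCongr σ (Equiv.prodCongr (Equiv.refl V) σ)).symm
          (Equiv.sumCongr σ (Equiv.prodCongr (Equiv.refl V) σ)).symm
          (coronaAdj (Matrix.diagonal d) B) := by
    simp [Matrix.reindex_apply]
  rw [this, Matrix.charpoly_reindex]

end Aux

/-- If the signed graphs `S₁` and `S₂` (on the same number `n` of vertices) are adjacency
cospectral, then for any signed graph `S`, the s-neighbourhood coronas `S₁ ⋆ₛ S` and
`S₂ ⋆ₛ S` are adjacency cospectral, i.e. their adjacency matrices have equal characteristic
polynomials. -/
theorem corona_adj_cospectral {n m : ℕ}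
    (A₁ A₂ : Matrix (Fin n) (Fin n) ℝ) (B : Matrix (Fin m) (Fin m) ℝ)
    (h₁ : IsSignedAdj A₁) (h₂ : IsSignedAdj A₂) (hB : IsSignedAdj B)
    (hcosp : A₁.charpoly = A₂.charpoly) :
    (coronaAdj A₁ B).charpoly = (coronaAdj A₂ B).charpoly := by
  classical
  have hH1 : A₁.IsHermitian := h₁.1
  have hH2 : A₂.IsHermitian := h₂.1
  set d₁ := hH1.eigenvalues with hd₁
  set d₂ := hH2.eigenvalues with hd₂
  set U₁ : Matrix (Fin n) (Fin n) ℝ := (hH1.eigenvectorUnitary : Matrix (Fin n) (Fin n) ℝ)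
    with hU₁def
  set U₂ : Matrix (Fin n) (Fin n) ℝ := (hH2.eigenvectorUnitary : Matrix (Fin n) (Fin n) ℝ)
    with hU₂def
  have hU₁ : U₁ * star U₁ = 1 := Matrix.mem_unitaryGroup_iff.mp hH1.eigenvectorUnitary.2
  have hU₁' : star U₁ * U₁ = 1 := Matrix.mem_unitaryGroup_iff'.mp hH1.eigenvectorUnitary.2
  have hU₂ : U₂ * star U₂ = 1 := Matrix.mem_unitaryGroup_iff.mp hH2.eigenvectorUnitary.2
  have hU₂' : star U₂ * U₂ = 1 := Matrix.mem_unitaryGroup_iff'.mp hH2.eigenvectorUnitary.2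
  have hs₁ : A₁ = U₁ * Matrix.diagonal d₁ * star U₁ := by
    have := hH1.spectral_theorem
    simpa using this
  have hs₂ : A₂ = U₂ * Matrix.diagonal d₂ * star U₂ := by
    have := hH2.spectral_theorem
    simpa using this
  have hdiag : (Matrix.diagonal d₁).charpoly = (Matrix.diagonal d₂).charpoly := by
    have e₁ : A₁.charpoly = (Matrix.diagonal d₁).charpoly := by
      rw [hs₁]; exact my_charpoly_conj _ _ _ hU₁ hU₁'
    have e₂ : A₂.charpoly = (Matrix.diagonal d₂).charpoly := by
      rw [hs₂]; exact my_charpoly_conj _ _ _ hU₂ hU₂'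
    rw [← e₁, ← e₂, hcosp]
  obtain ⟨σ, hσ⟩ := exists_perm_of_charpoly_diag_eq d₁ d₂ hdiag
  calc (coronaAdj A₁ B).charpoly
      = (coronaAdj (Matrix.diagonal d₁) B).charpoly := by
        rw [hs₁]; exact corona_charpoly_conj _ B U₁ (star U₁) hU₁ hU₁'
    _ = (coronaAdj (Matrix.diagonal (d₂ ∘ σ)) B).charpoly := by rw [← hσ]
    _ = (coronaAdj (Matrix.diagonal d₂) B).charpoly := corona_charpoly_perm σ d₂ B
    _ = (coronaAdj A₂ B).charpoly := by
        rw [hs₂]; exact (corona_charpoly_conj _ B U₂ (star U₂) hU₂ hU₂').symm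
end
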